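/- Let 𝕋 be a time scale, f, g : 𝕋 → ℝ, t ∈ 𝕋^κ, and α ∈ (0,1]. Assume f and g are continuous at t (as functions on 𝕋), g(t)·g(σ(t)) ≠ 0, g(s) ≠ 0 for all s ∈ 𝕋, L_f is a fractional derivative of f of order α at t, and L_g is a fractional derivative of g of order α at t. Then (L_f·g(t) − f(t)·L_g)/(g(t)·g(σ(t))) is a fractional derivative of the quotient f/g of order α at t. -/

import Mathlib

open Real Set Classical

/-- Forward jump operator of a time scale, with the convention `σ t = t`
when `{s ∈ T | t < s}` is empty. -/
noncomputable def tsSigma (T : Set ℝ) (t : ℝ) : ℝ :=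
  if ({s | s ∈ T ∧ t < s}).Nonempty then sInf {s | s ∈ T ∧ t < s} else t

/-- Graininess function `μ t = σ t - t`. -/
noncomputable def tsMu (T : Set ℝ) (t : ℝ) : ℝ :=
  tsSigma T t - t

/-- Backward jump operator, with the convention `ρ t = t`
when `{s ∈ T | s < t}` is empty. -/
noncomputable def tsRho (T : Set ℝ) (t : ℝ) : ℝ :=
  if ({s | s ∈ T ∧ s < t}).Nonempty then sSup {s | s ∈ T ∧ s < t} else t

/-- `T^κ`: `T` with its maximum removed if the maximum exists and is
left-scattered; `T` otherwise. -/
def tsKappa (T : Set ℝ) : Set ℝ :=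
  {t | t ∈ T ∧ ¬ (IsGreatest T t ∧ tsRho T t < t)}

/-- `t` is right-scattered when `σ t > t`. -/
def RightScattered (T : Set ℝ) (t : ℝ) : Prop :=
  t < tsSigma T t

/-- `t` is right-dense when `t < sup T` and `σ t = t`. -/
def RightDense (T : Set ℝ) (t : ℝ) : Prop :=
  (∃ s ∈ T, t < s) ∧ tsSigma T t = t

/-- Signed real power `x^α = sign(x) · |x|^α` (agrees with `rpow` for `x ≥ 0`). -/
noncomputable def fpow (α x : ℝ) : ℝ := Real.sign x * |x| ^ α

/-- `α = 1/q` for some odd natural number `q`. -/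
def IsOddRecip (α : ℝ) : Prop := ∃ q : ℕ, Odd q ∧ α = 1 / (q : ℝ)

/-- `L` is a fractional derivative of `f` of order `α` at `t` on the time scale `T`. -/
def FracDerivAt (T : Set ℝ) (f : ℝ → ℝ) (α t L : ℝ) : Prop :=
  (IsOddRecip α →
    ∀ ε > (0:ℝ), ∃ δ > (0:ℝ), ∀ s ∈ T, |t - s| < δ →
      |(f (tsSigma T t) - f s) - L * fpow α (tsSigma T t - s)|
        ≤ ε * |tsSigma T t - s| ^ α) ∧
  (¬ IsOddRecip α →
    ∀ ε > (0:ℝ), ∃ δ > (0:ℝ), ∀ s ∈ T, t - δ < s → s < t →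
      |(f (tsSigma T t) - f s) - L * fpow α (tsSigma T t - s)|
        ≤ ε * |tsSigma T t - s| ^ α)

/-- Continuity at `t` of `f` as a function on the time scale `T`. -/
def ContinuousAtTS (T : Set ℝ) (f : ℝ → ℝ) (t : ℝ) : Prop :=
  ∀ ε > (0:ℝ), ∃ δ > (0:ℝ), ∀ s ∈ T, |t - s| < δ → |f t - f s| ≤ ε


lemma abs_fpow_le (α x : ℝ) : |fpow α x| ≤ |x| ^ α := by
  have h0 : (0:ℝ) ≤ |x| ^ α := Real.rpow_nonneg (abs_nonneg x) α
  have hs : |Real.sign x| ≤ 1 := by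
    rcases lt_trichotomy x 0 with h|h|h
    · rw [Real.sign_of_neg h]; norm_num
    · rw [h, Real.sign_zero]; norm_num
    · rw [Real.sign_of_pos h]; norm_num
  rw [fpow, abs_mul, abs_of_nonneg h0]
  calc |Real.sign x| * |x| ^ α ≤ 1 * |x| ^ α :=
        mul_le_mul_of_nonneg_right hs h0
    _ = |x| ^ α := one_mul _

lemma quot_est (fσ fs ft gσ gs gt Lf Lg w P η η' ε : ℝ)
    (hgσ : gσ ≠ 0) (hgs : gs ≠ 0) (hgt : gt ≠ 0)
    (hε : 0 ≤ ε) (hη : 0 ≤ η) (hη'0 : 0 ≤ η')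
    (hP : 0 ≤ P) (hw : |w| ≤ P)
    (hA : |(fσ - fs) - Lf * w| ≤ η * P)
    (hB : |(gσ - gs) - Lg * w| ≤ η * P)
    (hfc : |ft - fs| ≤ η') (hgc : |gt - gs| ≤ η')
    (h1 : η' ≤ 1) (h2 : η' ≤ |gt| / 2)
    (hsum : η * ((|gt| + 1) + (|ft| + 1)) * |gt| + η' * |Lg| * ((|gt| + 1) + (|ft| + 1))
      ≤ ε * |gσ| * (|gt| / 2) * |gt|) :
    |fσ / gσ - fs / gs - (Lf * gt - ft * Lg) / (gt * gσ) * w| ≤ ε * P := by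
  have hgt' : 0 < |gt| := abs_pos.mpr hgt
  have hgσ' : 0 < |gσ| := abs_pos.mpr hgσ
  have hgs1 : |gt| / 2 ≤ |gs| := by
    have := abs_sub_abs_le_abs_sub gt gs
    linarith
  have hgs' : 0 < |gs| := lt_of_lt_of_le (by linarith) hgs1
  have hgs2 : |gs| ≤ |gt| + 1 := by
    have := abs_sub_abs_le_abs_sub gs gt
    rw [abs_sub_comm] at this; linarith
  have hfs : |fs| ≤ |ft| + 1 := by
    have := abs_sub_abs_le_abs_sub fs ft
    rw [abs_sub_comm] at this; linarith
  have hgc' : |gs - gt| ≤ η' := by rw [abs_sub_comm]; exact hgc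
  have key : (fσ / gσ - fs / gs - (Lf * gt - ft * Lg) / (gt * gσ) * w) * (gσ * gs * gt)
      = (((fσ - fs) - Lf * w) * gs - fs * ((gσ - gs) - Lg * w)) * gt
        + w * Lg * ((ft - fs) * gs + fs * (gs - gt)) := by
    field_simp
    ring
  have hD : 0 < |gσ * gs * gt| := by
    rw [abs_mul, abs_mul]; positivity
  rw [← mul_le_mul_iff_left₀ hD, ← abs_mul, key]
  have tri : ∀ x y : ℝ, |x - y| ≤ |x| + |y| := fun x y => by
    rw [sub_eq_add_neg]; exact (abs_add_le _ _).trans (by rw [abs_neg])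
  calc |(((fσ - fs) - Lf * w) * gs - fs * ((gσ - gs) - Lg * w)) * gt
        + w * Lg * ((ft - fs) * gs + fs * (gs - gt))|
      ≤ |(((fσ - fs) - Lf * w) * gs - fs * ((gσ - gs) - Lg * w)) * gt|
        + |w * Lg * ((ft - fs) * gs + fs * (gs - gt))| := abs_add_le _ _
    _ ≤ (|(fσ - fs) - Lf * w| * |gs| + |fs| * |(gσ - gs) - Lg * w|) * |gt|
        + |w| * |Lg| * (|ft - fs| * |gs| + |fs| * |gs - gt|) := by
        apply add_le_add
        · rw [abs_mul]
          apply mul_le_mul_of_nonneg_right _ (abs_nonneg gt)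
          calc |((fσ - fs) - Lf * w) * gs - fs * ((gσ - gs) - Lg * w)|
              ≤ |((fσ - fs) - Lf * w) * gs| + |fs * ((gσ - gs) - Lg * w)| := tri _ _
            _ = |(fσ - fs) - Lf * w| * |gs| + |fs| * |(gσ - gs) - Lg * w| := by
                rw [abs_mul, abs_mul]
        · rw [abs_mul, abs_mul]
          apply mul_le_mul_of_nonneg_left _ (by positivity)
          calc |(ft - fs) * gs + fs * (gs - gt)|
              ≤ |(ft - fs) * gs| + |fs * (gs - gt)| := abs_add_le _ _
            _ = |ft - fs| * |gs| + |fs| * |gs - gt| := by rw [abs_mul, abs_mul]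
    _ ≤ (η * P * (|gt| + 1) + (|ft| + 1) * (η * P)) * |gt|
        + P * |Lg| * (η' * (|gt| + 1) + (|ft| + 1) * η') := by
        gcongr <;> positivity
    _ = P * (η * ((|gt| + 1) + (|ft| + 1)) * |gt| + η' * |Lg| * ((|gt| + 1) + (|ft| + 1))) := by
        ring
    _ ≤ P * (ε * |gσ| * (|gt| / 2) * |gt|) := mul_le_mul_of_nonneg_left hsum hP
    _ = ε * P * (|gσ| * (|gt| / 2) * |gt|) := by ring
    _ ≤ ε * P * (|gσ| * |gs| * |gt|) := by gcongr
    _ = ε * P * |gσ * gs * gt| := by rw [abs_mul, abs_mul]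

lemma main_aux (T : Set ℝ) (f g : ℝ → ℝ) (t σ α Lf Lg ε : ℝ)
    (C : ℝ → ℝ → Prop)
    (hCmono : ∀ s δ δ', δ ≤ δ' → C s δ → C s δ')
    (hCabs : ∀ s δ, C s δ → |t - s| < δ)
    (hε : 0 < ε) (hgt : g t ≠ 0) (hgσ : g σ ≠ 0)
    (hnz : ∀ s ∈ T, g s ≠ 0)
    (hfc : ∀ ε > (0:ℝ), ∃ δ > (0:ℝ), ∀ s ∈ T, |t - s| < δ → |f t - f s| ≤ ε)
    (hgc : ∀ ε > (0:ℝ), ∃ δ > (0:ℝ), ∀ s ∈ T, |t - s| < δ → |g t - g s| ≤ ε)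
    (hf : ∀ η > (0:ℝ), ∃ δ > (0:ℝ), ∀ s ∈ T, C s δ →
      |(f σ - f s) - Lf * fpow α (σ - s)| ≤ η * |σ - s| ^ α)
    (hg : ∀ η > (0:ℝ), ∃ δ > (0:ℝ), ∀ s ∈ T, C s δ →
      |(g σ - g s) - Lg * fpow α (σ - s)| ≤ η * |σ - s| ^ α) :
    ∃ δ > (0:ℝ), ∀ s ∈ T, C s δ →
      |(f σ / g σ - f s / g s) - (Lf * g t - f t * Lg) / (g t * g σ) * fpow α (σ - s)|
        ≤ ε * |σ - s| ^ α := by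
  have hgt' : 0 < |g t| := abs_pos.mpr hgt
  have hgσ' : 0 < |g σ| := abs_pos.mpr hgσ
  set S : ℝ := (|g t| + 1) + (|f t| + 1) with hS_def
  have hS : 0 < S := by positivity
  set E : ℝ := ε * |g σ| * (|g t| / 2) * |g t| with hE_def
  have hE : 0 < E := by positivity
  set η : ℝ := E / (2 * (S * |g t|)) with hη_def
  have hηpos : 0 < η := by positivity
  set η' : ℝ := min (min 1 (|g t| / 2)) (E / (2 * ((|Lg| + 1) * S))) with hη'_def
  have hη'pos : 0 < η' := lt_min (lt_min one_pos (by positivity)) (by positivity)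
  obtain ⟨δf, hδf, Hf⟩ := hf η hηpos
  obtain ⟨δg, hδg, Hg⟩ := hg η hηpos
  obtain ⟨δ1, hδ1, H1⟩ := hfc η' hη'pos
  obtain ⟨δ2, hδ2, H2⟩ := hgc η' hη'pos
  refine ⟨min (min δf δg) (min δ1 δ2), by positivity, ?_⟩
  intro s hs hC
  have habs := hCabs s _ hC
  have hsum : η * ((|g t| + 1) + (|f t| + 1)) * |g t|
      + η' * |Lg| * ((|g t| + 1) + (|f t| + 1)) ≤ ε * |g σ| * (|g t| / 2) * |g t| := by
    have hne : S * |g t| ≠ 0 := by positivity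
    have e1 : η * S * |g t| = E / 2 := by
      rw [hη_def]; field_simp
    have e2 : η' * |Lg| * S ≤ E / 2 := by
      have h5 : η' ≤ E / (2 * ((|Lg| + 1) * S)) := min_le_right _ _
      calc η' * |Lg| * S ≤ (E / (2 * ((|Lg| + 1) * S))) * (|Lg| + 1) * S := by
            gcongr
            · linarith [abs_nonneg Lg]
          _ = E / 2 := by field_simp
    rw [← hS_def, ← hE_def]
    clear_value S E η η'
    linarith
  have := quot_est (f σ) (f s) (f t) (g σ) (g s) (g t) Lf Lg (fpow α (σ - s))
    (|σ - s| ^ α) η η' ε hgσ (hnz s hs) hgt hε.le hηpos.le hη'pos.le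
    (Real.rpow_nonneg (abs_nonneg _) α) (abs_fpow_le α (σ - s))
    (Hf s hs (hCmono s _ _ (le_trans (min_le_left _ _) (min_le_left _ _)) hC))
    (Hg s hs (hCmono s _ _ (le_trans (min_le_left _ _) (min_le_right _ _)) hC))
    (H1 s hs (lt_of_lt_of_le habs (le_trans (min_le_right _ _) (min_le_left _ _))))
    (H2 s hs (lt_of_lt_of_le habs (le_trans (min_le_right _ _) (min_le_right _ _))))
    (le_trans (min_le_left _ _) (min_le_left _ _))
    (le_trans (min_le_left _ _) (min_le_right _ _))
    hsum
  calc |(f σ / g σ - f s / g s) - (Lf * g t - f t * Lg) / (g t * g σ) * fpow α (σ - s)|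
      = |f σ / g σ - f s / g s - (Lf * g t - f t * Lg) / (g t * g σ) * fpow α (σ - s)| := by
        ring_nf
    _ ≤ ε * |σ - s| ^ α := this

/-- Quotient rule: if `f`, `g` are continuous at `t`, `g(t)·g(σ t) ≠ 0`, `g` is
nowhere zero on `T`, and `L_f`, `L_g` are fractional derivatives of `f`, `g` of
order `α` at `t`, then `(L_f·g(t) - f(t)·L_g)/(g(t)·g(σ t))` is a fractional
derivative of `f/g` of order `α` at `t`. -/
theorem fracDeriv_div
    (T : Set ℝ) (hT : T.Nonempty) (hTc : IsClosed T)
    (f g : ℝ → ℝ) (t : ℝ) (ht : t ∈ tsKappa T)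
    (α : ℝ) (hα : α ∈ Set.Ioc (0:ℝ) 1) (Lf Lg : ℝ)
    (hfc : ContinuousAtTS T f t) (hgc : ContinuousAtTS T g t)
    (hne : g t * g (tsSigma T t) ≠ 0)
    (hnz : ∀ s ∈ T, g s ≠ 0)
    (hf : FracDerivAt T f α t Lf) (hg : FracDerivAt T g α t Lg) :
    FracDerivAt T (fun s => f s / g s) α t
      ((Lf * g t - f t * Lg) / (g t * g (tsSigma T t))) := by
  obtain ⟨hgt0, hgσ0⟩ := mul_ne_zero_iff.mp hne
  constructor
  · intro hodd ε hε
    obtain ⟨δ, hδ, H⟩ := main_aux T f g t (tsSigma T t) α Lf Lg ε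
      (fun s δ => |t - s| < δ)
      (fun s δ δ' hle h => lt_of_lt_of_le h hle)
      (fun s δ h => h)
      hε hgt0 hgσ0 hnz hfc hgc (hf.1 hodd) (hg.1 hodd)
    exact ⟨δ, hδ, fun s hs h => H s hs h⟩
  · intro hodd ε hε
    obtain ⟨δ, hδ, H⟩ := main_aux T f g t (tsSigma T t) α Lf Lg ε
      (fun s δ => t - δ < s ∧ s < t)
      (fun s δ δ' hle h => ⟨lt_of_le_of_lt (by linarith) h.1, h.2⟩)
      (fun s δ h => by rw [abs_sub_lt_iff]; constructor <;> linarith [h.1, h.2])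
      hε hgt0 hgσ0 hnz hfc hgc
      (fun η hη => by obtain ⟨δ, hδ, H⟩ := hf.2 hodd η hη
                      exact ⟨δ, hδ, fun s hs h => H s hs h.1 h.2⟩)
      (fun η hη => by obtain ⟨δ, hδ, H⟩ := hg.2 hodd η hη
                      exact ⟨δ, hδ, fun s hs h => H s hs h.1 h.2⟩)
    exact ⟨δ, hδ, fun s hs h1 h2 => H s hs ⟨h1, h2⟩⟩
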